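/- Let Z be a gauge field on T such that (QZ)(y, y+Le_μ) = 0 for every coarse bond, (τZ)(y,x) = 0 for every y ∈ T' and every x ∈ B(y), and dZ(p) = 0 for every plaquette p of T. Then Z(b) = 0 for every bond b of T. -/

import Mathlib

open Finset

noncomputable section

/-- Points of the discrete torus `(ℤ/Nℤ)³`. -/
abbrev TPt (N : ℕ) : Type := Fin 3 → ZMod N

/-- The standard unit vector `e_μ` in the torus. -/
def unitVec (N : ℕ) (μ : Fin 3) : TPt N := fun i => if i = μ then 1 else 0

/-- The representative of `a ∈ ℤ/Nℤ` in the symmetric range `{-(N-1)/2, …, (N-1)/2}`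
(for odd `N`). -/
def symRep (N : ℕ) (a : ZMod N) : ℤ :=
  if 2 * (a.val : ℤ) + 1 ≤ (N : ℤ) then (a.val : ℤ) else (a.val : ℤ) - (N : ℤ)

/-- Shift a torus point by `k` steps in direction `μ`. -/
def shiftT {N : ℕ} (z : TPt N) (μ : Fin 3) (k : ℤ) : TPt N :=
  fun i => if i = μ then z i + (k : ZMod N) else z i

/-- The sum of the gauge field `A` along the straight lattice path from `z` to `z + t·e_μ`. -/
def segT {N : ℕ} (A : TPt N → TPt N → ℝ) (z : TPt N) (μ : Fin 3) (t : ℤ) : ℝ :=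
  if 0 ≤ t then ∑ j ∈ Finset.range t.toNat, A (shiftT z μ (j : ℤ)) (shiftT z μ ((j : ℤ) + 1))
  else ∑ j ∈ Finset.range (-t).toNat, A (shiftT z μ (-(j : ℤ))) (shiftT z μ (-(j : ℤ) - 1))

/-- The field strength `dA` on the plaquette based at `x` spanned by `e_μ, e_ν`. -/
def plaqT {N : ℕ} (A : TPt N → TPt N → ℝ) (x : TPt N) (μ ν : Fin 3) : ℝ :=
  A x (x + unitVec N μ) + A (x + unitVec N μ) (x + unitVec N μ + unitVec N ν)
    + A (x + unitVec N μ + unitVec N ν) (x + unitVec N ν) + A (x + unitVec N ν) x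

/-- The corner of the rectilinear path `Γ^π_{yx}` reached after the first `m` coordinate
moves. -/
def interPtT {N : ℕ} (y x : TPt N) (π : Equiv.Perm (Fin 3)) (m : ℕ) : TPt N :=
  fun i => if ((π.symm i : Fin 3) : ℕ) < m then x i else y i

/-- `A(Γ^π_{yx})`: the sum of `A` along the rectilinear path (not wrapping around the
torus) from `y` to `x`, moving the coordinates to their final values in the order
`π 0, π 1, π 2`; the coordinate increments are the symmetric representatives of `x - y`. -/
def gammaSumT {N : ℕ} (A : TPt N → TPt N → ℝ) (π : Equiv.Perm (Fin 3)) (y x : TPt N) : ℝ :=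
  ∑ m : Fin 3, segT A (interPtT y x π (m : ℕ)) (π m) (symRep N (x (π m) - y (π m)))

/-- `(τA)(y,x) = (1/6) Σ_π A(Γ^π_{yx})`, averaged over the `3! = 6` permutations. -/
def tauBlk {N : ℕ} (A : TPt N → TPt N → ℝ) (y x : TPt N) : ℝ :=
  (1 / 6) * ∑ π : Equiv.Perm (Fin 3), gammaSumT A π y x

/-- The block of radius `R` centered at `y`: all `x` whose coordinates relative to `y`
have symmetric representative of absolute value at most `R`. -/
def blockF (N : ℕ) [NeZero N] (R : ℤ) (y : TPt N) : Finset (TPt N) :=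
  Finset.univ.filter fun x => ∀ i, |symRep N (x i - y i)| ≤ R

/-- Membership in the coarse lattice `(Lℤ/Nℤ)³ ⊆ (ℤ/Nℤ)³`. -/
def isCoarse (L N : ℕ) (y : TPt N) : Prop :=
  ∀ i, ∃ c : ZMod N, y i = (L : ZMod N) * c

/-- The coarse unit vector `L·e_μ`. -/
def cUnitVec (L N : ℕ) (μ : Fin 3) : TPt N := fun i => if i = μ then (L : ZMod N) else 0

/-- The block-averaged field on coarse bonds:
`(QA)(y, y+Le_μ) = L⁻⁴ Σ_{x ∈ B(y)} A(Γ_{x,x+Le_μ})`. -/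
def Qc (L : ℕ) {N : ℕ} [NeZero N] (A : TPt N → TPt N → ℝ) (y : TPt N) (μ : Fin 3) : ℝ :=
  ((L : ℝ) ^ 4)⁻¹ * ∑ x ∈ blockF N (((L : ℤ) - 1) / 2) y, segT A x μ (L : ℤ)
namespace BGR

variable {N : ℕ}

lemma shiftT_zero (z : TPt N) (μ : Fin 3) : shiftT z μ 0 = z := by
  funext i; simp [shiftT]

lemma shiftT_add (z : TPt N) (μ : Fin 3) (s t : ℤ) :
    shiftT (shiftT z μ s) μ t = shiftT z μ (s + t) := by
  funext i; simp only [shiftT]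
  by_cases h : i = μ <;> simp [h]
  push_cast; ring

lemma shiftT_comm (z : TPt N) (μ ν : Fin 3) (s t : ℤ) :
    shiftT (shiftT z μ s) ν t = shiftT (shiftT z ν t) μ s := by
  funext i; simp only [shiftT]
  split_ifs <;> simp_all <;> ring

lemma shiftT_one_add (z : TPt N) (μ : Fin 3) (t : ℤ) :
    shiftT z μ (t + 1) = shiftT z μ t + unitVec N μ := by
  funext i; simp only [shiftT, unitVec, Pi.add_apply]
  by_cases h : i = μ <;> simp [h]
  push_cast; ring

lemma shiftT_one (z : TPt N) (μ : Fin 3) : shiftT z μ 1 = z + unitVec N μ := by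
  have := shiftT_one_add z μ 0
  rwa [shiftT_zero, zero_add] at this

variable (A : TPt N → TPt N → ℝ)

lemma seg_zero (z : TPt N) (μ : Fin 3) : segT A z μ 0 = 0 := by
  simp [segT]

lemma seg_step (hZ : ∀ x x', A x x' = - A x' x) (z : TPt N) (μ : Fin 3) (t : ℤ) :
    segT A z μ (t + 1) = segT A z μ t + A (shiftT z μ t) (shiftT z μ (t + 1)) := by
  rcases le_or_gt 0 t with ht | ht
  · have h1 : (0:ℤ) ≤ t + 1 := by omega
    simp only [segT, if_pos ht, if_pos h1]
    have h2 : (t + 1).toNat = t.toNat + 1 := by omega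
    rw [h2, Finset.sum_range_succ, Int.toNat_of_nonneg ht]
  · have h1 : ¬ (0:ℤ) ≤ t := by omega
    rcases eq_or_lt_of_le (by omega : t ≤ -1) with rfl | ht2
    · simp only [segT]
      norm_num
      rw [hZ]
      ring
    · have h2 : ¬ (0:ℤ) ≤ t + 1 := by omega
      simp only [segT, if_neg h1, if_neg h2]
      have hn : (-t).toNat = (-(t+1)).toNat + 1 := by omega
      rw [hn, Finset.sum_range_succ]
      have hc : -((-(t+1)).toNat : ℤ) = t + 1 := by omega
      rw [hc]
      have hc2 : t + 1 - 1 = t := by ring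
      rw [hc2, hZ (shiftT z μ (t+1)) (shiftT z μ t)]
      ring

lemma seg_add (hZ : ∀ x x', A x x' = - A x' x) (z : TPt N) (μ : Fin 3) (s t : ℤ) :
    segT A z μ (s + t) = segT A z μ s + segT A (shiftT z μ s) μ t := by
  induction t using Int.induction_on with
  | zero => simp [seg_zero]
  | succ k ih =>
      have h1 : s + ((k : ℤ) + 1) = (s + k) + 1 := by ring
      rw [h1, seg_step A hZ, ih, seg_step A hZ (shiftT z μ s) μ k, shiftT_add, shiftT_add]
      have : s + ((k:ℤ) + 1) = s + k + 1 := by ring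
      rw [this]
      ring
  | pred k ih =>
      have h1 : s + (-(k : ℤ) - 1) + 1 = s + (-k) := by ring
      have h2 := seg_step A hZ z μ (s + (-(k:ℤ) - 1))
      rw [h1] at h2
      have h3 := seg_step A hZ (shiftT z μ s) μ (-(k:ℤ) - 1)
      have h4 : -(k:ℤ) - 1 + 1 = -k := by ring
      rw [h4] at h3
      rw [ih] at h2
      rw [shiftT_add, shiftT_add] at h3
      linarith [h2, h3]

lemma seg_one (z : TPt N) (μ : Fin 3) : segT A z μ 1 = A z (shiftT z μ 1) := by
  simp [segT, shiftT_zero]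


lemma shiftT_swap_one (z : TPt N) (μ ν : Fin 3) (s : ℤ) :
    shiftT (shiftT (shiftT z ν s) μ 1) ν 1 = shiftT (shiftT z ν (s+1)) μ 1 := by
  rw [shiftT_comm (shiftT z ν s) μ ν 1 1, shiftT_add]

lemma plaq' (hZ : ∀ x x', A x x' = - A x' x)
    (hdZ : ∀ (x : TPt N) (μ ν : Fin 3), μ ≠ ν → plaqT A x μ ν = 0)
    {μ ν : Fin 3} (hμν : μ ≠ ν) (w : TPt N) :
    A w (w + unitVec N μ) + A (w + unitVec N μ) (w + unitVec N μ + unitVec N ν)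
      = A w (w + unitVec N ν) + A (w + unitVec N ν) (w + unitVec N ν + unitVec N μ) := by
  have h := hdZ w μ ν hμν
  unfold plaqT at h
  rw [hZ (w + unitVec N μ + unitVec N ν) (w + unitVec N ν), hZ (w + unitVec N ν) w] at h
  have e : w + unitVec N ν + unitVec N μ = w + unitVec N μ + unitVec N ν := by ring
  rw [e]
  linarith

lemma plaq'' (hZ : ∀ x x', A x x' = - A x' x)
    (hdZ : ∀ (x : TPt N) (μ ν : Fin 3), μ ≠ ν → plaqT A x μ ν = 0)
    {μ ν : Fin 3} (hμν : μ ≠ ν) (w : TPt N) :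
    A w (shiftT w μ 1) + A (shiftT w μ 1) (shiftT (shiftT w μ 1) ν 1)
      = A w (shiftT w ν 1) + A (shiftT w ν 1) (shiftT (shiftT w ν 1) μ 1) := by
  simp only [shiftT_one]
  exact plaq' A hZ hdZ hμν w

lemma step_rect (hZ : ∀ x x', A x x' = - A x' x)
    (hdZ : ∀ (x : TPt N) (μ ν : Fin 3), μ ≠ ν → plaqT A x μ ν = 0)
    {μ ν : Fin 3} (hμν : μ ≠ ν) (z : TPt N) (t : ℤ) :
    A z (shiftT z μ 1) + segT A (shiftT z μ 1) ν t
      = segT A z ν t + A (shiftT z ν t) (shiftT (shiftT z ν t) μ 1) := by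
  induction t using Int.induction_on with
  | zero => simp [seg_zero, shiftT_zero]
  | succ k ih =>
      rw [seg_step A hZ (shiftT z μ 1) ν k, seg_step A hZ z ν k]
      have c1 : shiftT (shiftT z μ 1) ν (k : ℤ) = shiftT (shiftT z ν k) μ 1 := shiftT_comm ..
      have c2 : shiftT (shiftT z μ 1) ν ((k : ℤ)+1) = shiftT (shiftT z ν ((k:ℤ)+1)) μ 1 :=
        shiftT_comm ..
      rw [c1, c2]
      have hp := plaq'' A hZ hdZ hμν (shiftT z ν (k:ℤ))
      rw [shiftT_swap_one, shiftT_add z ν (k:ℤ) 1] at hp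
      linarith
  | pred k ih =>
      have hs1 := seg_step A hZ (shiftT z μ 1) ν (-(k:ℤ)-1)
      have hs2 := seg_step A hZ z ν (-(k:ℤ)-1)
      have h4 : -(k:ℤ) - 1 + 1 = -k := by ring
      rw [h4] at hs1 hs2
      have hp := plaq'' A hZ hdZ hμν (shiftT z ν (-(k:ℤ)-1))
      rw [shiftT_swap_one, shiftT_add z ν (-(k:ℤ)-1) 1, h4] at hp
      have c1 : shiftT (shiftT z μ 1) ν (-(k:ℤ)) = shiftT (shiftT z ν (-(k:ℤ))) μ 1 :=
        shiftT_comm ..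
      have c2 : shiftT (shiftT z μ 1) ν (-(k:ℤ)-1) = shiftT (shiftT z ν (-(k:ℤ)-1)) μ 1 :=
        shiftT_comm ..
      rw [c1] at hs1
      rw [c2] at hs1
      linarith

lemma rect (hZ : ∀ x x', A x x' = - A x' x)
    (hdZ : ∀ (x : TPt N) (μ ν : Fin 3), μ ≠ ν → plaqT A x μ ν = 0)
    {μ ν : Fin 3} (hμν : μ ≠ ν) (z : TPt N) (s t : ℤ) :
    segT A z μ s + segT A (shiftT z μ s) ν t
      = segT A z ν t + segT A (shiftT z ν t) μ s := by
  induction s using Int.induction_on with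
  | zero => simp [seg_zero, shiftT_zero]
  | succ k ih =>
      rw [seg_step A hZ z μ k, seg_step A hZ (shiftT z ν t) μ k]
      have hsr := step_rect A hZ hdZ hμν (shiftT z μ (k:ℤ)) t
      have e1 : shiftT (shiftT z μ (k:ℤ)) μ 1 = shiftT z μ ((k:ℤ)+1) := by rw [shiftT_add]
      have e2 : shiftT (shiftT z μ (k:ℤ)) ν t = shiftT (shiftT z ν t) μ (k:ℤ) := shiftT_comm ..
      rw [e1, e2] at hsr
      have e3 : shiftT (shiftT (shiftT z ν t) μ (k:ℤ)) μ 1 = shiftT (shiftT z ν t) μ ((k:ℤ)+1) := by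
        rw [shiftT_add]
      rw [e3] at hsr
      linarith
  | pred k ih =>
      have hs1 := seg_step A hZ z μ (-(k:ℤ)-1)
      have hs2 := seg_step A hZ (shiftT z ν t) μ (-(k:ℤ)-1)
      have h4 : -(k:ℤ) - 1 + 1 = -k := by ring
      rw [h4] at hs1 hs2
      have hsr := step_rect A hZ hdZ hμν (shiftT z μ (-(k:ℤ)-1)) t
      have e1 : shiftT (shiftT z μ (-(k:ℤ)-1)) μ 1 = shiftT z μ (-(k:ℤ)) := by
        rw [shiftT_add, h4]
      have e2 : shiftT (shiftT z μ (-(k:ℤ)-1)) ν t = shiftT (shiftT z ν t) μ (-(k:ℤ)-1) :=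
        shiftT_comm ..
      have e3 : shiftT (shiftT (shiftT z ν t) μ (-(k:ℤ)-1)) μ 1
          = shiftT (shiftT z ν t) μ (-(k:ℤ)) := by rw [shiftT_add, h4]
      rw [e1, e2, e3] at hsr
      linarith

lemma symRep_cast [NeZero N] (a : ZMod N) : ((symRep N a : ℤ) : ZMod N) = a := by
  unfold symRep
  split_ifs with h
  · push_cast
    rw [ZMod.natCast_val, ZMod.cast_id]
  · push_cast
    rw [ZMod.natCast_val, ZMod.cast_id, ZMod.natCast_self, sub_zero]

lemma symRep_bound [NeZero N] (hodd : Odd N) (a : ZMod N) :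
    2 * |symRep N a| ≤ (N : ℤ) - 1 := by
  have hv : a.val < N := ZMod.val_lt a
  have hN : N % 2 = 1 := Nat.odd_iff.mp hodd
  unfold symRep
  split_ifs with h
  · rw [abs_of_nonneg (by positivity)]
    omega
  · rw [abs_of_nonpos (by omega)]
    omega

lemma symRep_unique [NeZero N] (hodd : Odd N) (a : ZMod N) (s : ℤ)
    (h : ((s : ZMod N)) = a) (hb : 2 * |s| ≤ (N : ℤ) - 1) : symRep N a = s := by
  have h1 : ((symRep N a - s : ℤ) : ZMod N) = 0 := by
    push_cast
    rw [symRep_cast, h, sub_self]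
  have h2 : (N : ℤ) ∣ (symRep N a - s) := by
    exact_mod_cast (ZMod.intCast_zmod_eq_zero_iff_dvd _ N).mp h1
  have h3 := symRep_bound hodd a
  have hN1 : (1:ℤ) ≤ (N:ℤ) := by exact_mod_cast Nat.one_le_iff_ne_zero.mpr (NeZero.ne N)
  have habs : |symRep N a - s| < (N:ℤ) := by
    have htr := abs_add_le (symRep N a) (-s)
    rw [abs_neg, ← sub_eq_add_neg] at htr
    omega
  rcases h2 with ⟨c, hc⟩
  rcases eq_or_ne c 0 with rfl | hc0
  · omega
  · exfalso
    have h1c : (1:ℤ) ≤ |c| := Int.one_le_abs hc0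
    rw [hc, abs_mul, abs_of_nonneg (by positivity : (0:ℤ) ≤ (N:ℤ))] at habs
    nlinarith

lemma symRep_zero [NeZero N] : symRep N (0 : ZMod N) = 0 := by
  have hN : 0 < N := Nat.pos_of_ne_zero (NeZero.ne N)
  unfold symRep
  rw [ZMod.val_zero]
  simp

lemma other_two : ∀ μ : Fin 3, ∃ a b : Fin 3, a ≠ b ∧ a ≠ μ ∧ b ≠ μ := by decide

lemma three_cover : ∀ a b c : Fin 3, a ≠ b → a ≠ c → b ≠ c →
    ∀ i : Fin 3, i = a ∨ i = b ∨ i = c := by decide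

lemma perm3_cases : ∀ a b c : Fin 3, a ≠ b → a ≠ c → b ≠ c →
    (a=0∧b=1∧c=2)∨(a=0∧b=2∧c=1)∨(a=1∧b=0∧c=2)∨(a=1∧b=2∧c=0)∨(a=2∧b=0∧c=1)∨(a=2∧b=1∧c=0) := by
  decide

/-- The three-segment path sum from `y` towards `x` in coordinate order `a, b, c`. -/
def Wv (A : TPt N → TPt N → ℝ) (y x : TPt N) (a b c : Fin 3) : ℝ :=
  segT A y a (symRep N (x a - y a))
    + segT A (shiftT y a (symRep N (x a - y a))) b (symRep N (x b - y b))
    + segT A (shiftT (shiftT y a (symRep N (x a - y a))) b (symRep N (x b - y b))) c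
        (symRep N (x c - y c))

lemma interPt_zero (y x : TPt N) (π : Equiv.Perm (Fin 3)) : interPtT y x π 0 = y := by
  funext i; simp [interPtT]

lemma interPt_succ [NeZero N] (y x : TPt N) (π : Equiv.Perm (Fin 3)) (m : Fin 3) :
    interPtT y x π ((m : ℕ) + 1)
      = shiftT (interPtT y x π (m : ℕ)) (π m) (symRep N (x (π m) - y (π m))) := by
  funext i
  simp only [interPtT, shiftT]
  by_cases h : i = π m
  · subst h
    rw [if_pos rfl]
    have hs : π.symm (π m) = m := Equiv.symm_apply_apply π m
    rw [hs, if_pos (by omega : (m:ℕ) < (m:ℕ)+1), if_neg (by omega : ¬ ((m:ℕ) < (m:ℕ)))]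
    rw [symRep_cast]
    ring
  · have hs : π.symm i ≠ m := fun hh => h (by rw [← hh, Equiv.apply_symm_apply])
    have hv : ((π.symm i : Fin 3) : ℕ) ≠ (m : ℕ) := fun hh => hs (Fin.ext hh)
    rw [if_neg h]
    by_cases h2 : ((π.symm i : Fin 3):ℕ) < (m:ℕ)
    · rw [if_pos (by omega), if_pos h2]
    · rw [if_neg (by omega), if_neg h2]

lemma gamma_eq_W [NeZero N] (A : TPt N → TPt N → ℝ) (π : Equiv.Perm (Fin 3)) (y x : TPt N) :
    gammaSumT A π y x = Wv A y x (π 0) (π 1) (π 2) := by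
  unfold gammaSumT Wv
  rw [Fin.sum_univ_three]
  have e0 : interPtT y x π ((0 : Fin 3) : ℕ) = y := interPt_zero y x π
  have e1 := interPt_succ y x π 0
  have e2 := interPt_succ y x π 1
  rw [e0] at e1 ⊢
  have hv1 : ((1 : Fin 3) : ℕ) = ((0 : Fin 3) : ℕ) + 1 := rfl
  have hv2 : ((2 : Fin 3) : ℕ) = ((0 : Fin 3) : ℕ) + 1 + 1 := rfl
  rw [hv1] at e2
  rw [e1] at e2
  rw [hv1, e1, hv2, e2]

variable (A : TPt N → TPt N → ℝ)

lemma Wv_swap12 [NeZero N] (hZ : ∀ x x', A x x' = - A x' x)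
    (hdZ : ∀ (x : TPt N) (μ ν : Fin 3), μ ≠ ν → plaqT A x μ ν = 0)
    {a b : Fin 3} (hab : a ≠ b) (c : Fin 3) (y x : TPt N) :
    Wv A y x a b c = Wv A y x b a c := by
  unfold Wv
  have hr := rect A hZ hdZ hab y (symRep N (x a - y a)) (symRep N (x b - y b))
  rw [shiftT_comm y a b (symRep N (x a - y a)) (symRep N (x b - y b))]
  linarith

lemma Wv_swap23 [NeZero N] (hZ : ∀ x x', A x x' = - A x' x)
    (hdZ : ∀ (x : TPt N) (μ ν : Fin 3), μ ≠ ν → plaqT A x μ ν = 0)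
    (a : Fin 3) {b c : Fin 3} (hbc : b ≠ c) (y x : TPt N) :
    Wv A y x a b c = Wv A y x a c b := by
  unfold Wv
  have hr := rect A hZ hdZ hbc (shiftT y a (symRep N (x a - y a)))
    (symRep N (x b - y b)) (symRep N (x c - y c))
  linarith

lemma Wv_std [NeZero N] (hZ : ∀ x x', A x x' = - A x' x)
    (hdZ : ∀ (x : TPt N) (μ ν : Fin 3), μ ≠ ν → plaqT A x μ ν = 0)
    {a b c : Fin 3} (hab : a ≠ b) (hac : a ≠ c) (hbc : b ≠ c) (y x : TPt N) :
    Wv A y x a b c = Wv A y x 0 1 2 := by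
  rcases perm3_cases a b c hab hac hbc with
    ⟨rfl,rfl,rfl⟩|⟨rfl,rfl,rfl⟩|⟨rfl,rfl,rfl⟩|⟨rfl,rfl,rfl⟩|⟨rfl,rfl,rfl⟩|⟨rfl,rfl,rfl⟩
  · rfl
  · exact Wv_swap23 A hZ hdZ 0 hbc y x
  · exact Wv_swap12 A hZ hdZ hab 2 y x
  · rw [Wv_swap23 A hZ hdZ 1 hbc y x,
      Wv_swap12 A hZ hdZ (show (1:Fin 3) ≠ 0 by decide) 2 y x]
  · rw [Wv_swap12 A hZ hdZ hab 1 y x,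
      Wv_swap23 A hZ hdZ 0 (show (2:Fin 3) ≠ 1 by decide) y x]
  · rw [Wv_swap23 A hZ hdZ 2 hbc y x,
      Wv_swap12 A hZ hdZ (show (2:Fin 3) ≠ 0 by decide) 1 y x,
      Wv_swap23 A hZ hdZ 0 (show (2:Fin 3) ≠ 1 by decide) y x]

lemma tau_eq_W [NeZero N] (hZ : ∀ x x', A x x' = - A x' x)
    (hdZ : ∀ (x : TPt N) (μ ν : Fin 3), μ ≠ ν → plaqT A x μ ν = 0)
    {a b c : Fin 3} (hab : a ≠ b) (hac : a ≠ c) (hbc : b ≠ c) (y x : TPt N) :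
    tauBlk A y x = Wv A y x a b c := by
  unfold tauBlk
  have hterm : ∀ π : Equiv.Perm (Fin 3), gammaSumT A π y x = Wv A y x 0 1 2 := by
    intro π
    rw [gamma_eq_W]
    exact Wv_std A hZ hdZ (π.injective.ne (by decide)) (π.injective.ne (by decide))
      (π.injective.ne (by decide)) y x
  rw [Finset.sum_congr rfl (fun π _ => hterm π), Finset.sum_const, nsmul_eq_mul]
  have hcard : (Finset.univ : Finset (Equiv.Perm (Fin 3))).card = 6 := by
    rw [Finset.card_univ, Fintype.card_perm, Fintype.card_fin]
    rfl
  rw [hcard, Wv_std A hZ hdZ hab hac hbc y x]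
  ring

lemma shift3_eq [NeZero N] (y x : TPt N) {a b c : Fin 3} (hab : a ≠ b) (hac : a ≠ c)
    (hbc : b ≠ c) :
    shiftT (shiftT (shiftT y a (symRep N (x a - y a))) b (symRep N (x b - y b))) c
      (symRep N (x c - y c)) = x := by
  funext i
  rcases three_cover a b c hab hac hbc i with rfl | rfl | rfl
  · simp only [shiftT]
    rw [if_neg hac, if_neg hab]
    simp only [if_true]
    rw [symRep_cast]
    ring
  · simp only [shiftT]
    rw [if_neg hbc]
    simp only [if_true]
    rw [if_neg (Ne.symm hab), symRep_cast]
    ring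
  · simp only [shiftT]
    simp only [if_true]
    rw [if_neg (Ne.symm hbc), if_neg (Ne.symm hac), symRep_cast]
    ring

lemma tau_step [NeZero N] (hNodd : Odd N) (hZ : ∀ x x', A x x' = - A x' x)
    (hdZ : ∀ (x : TPt N) (μ ν : Fin 3), μ ≠ ν → plaqT A x μ ν = 0)
    (y x : TPt N) (μ : Fin 3)
    (hbound : 2 * |symRep N (x μ - y μ)| + 2 ≤ (N:ℤ) - 1) :
    tauBlk A y (x + unitVec N μ) = tauBlk A y x + A x (x + unitVec N μ) := by
  obtain ⟨a, b, hab, haμ, hbμ⟩ := other_two μ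
  rw [tau_eq_W A hZ hdZ hab haμ hbμ y x, tau_eq_W A hZ hdZ hab haμ hbμ y (x + unitVec N μ)]
  have ea : (x + unitVec N μ) a = x a := by simp [unitVec, haμ]
  have eb : (x + unitVec N μ) b = x b := by simp [unitVec, hbμ]
  have eμ : (x + unitVec N μ) μ - y μ = (x μ - y μ) + 1 := by simp [unitVec]; ring
  have hsμ : symRep N ((x μ - y μ) + 1) = symRep N (x μ - y μ) + 1 := by
    apply symRep_unique hNodd
    · push_cast
      rw [symRep_cast]
    · have := abs_add_le (symRep N (x μ - y μ)) 1
      have h1 : |(1:ℤ)| = 1 := by norm_num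
      omega
  unfold Wv
  rw [ea, eb, eμ, hsμ]
  rw [seg_step A hZ _ μ (symRep N (x μ - y μ))]
  rw [show shiftT (shiftT (shiftT y a (symRep N (x a - y a))) b (symRep N (x b - y b))) μ
      (symRep N (x μ - y μ)) = x from shift3_eq y x hab haμ hbμ]
  rw [← shiftT_add _ μ (symRep N (x μ - y μ)) 1]
  rw [show shiftT (shiftT (shiftT y a (symRep N (x a - y a))) b (symRep N (x b - y b))) μ
      (symRep N (x μ - y μ)) = x from shift3_eq y x hab haμ hbμ]
  rw [shiftT_one]
  ring

lemma mem_blockF [NeZero N] {R : ℤ} {y x : TPt N} :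
    x ∈ blockF N R y ↔ ∀ i, |symRep N (x i - y i)| ≤ R := by
  simp [blockF]

lemma interior_bond [NeZero N] (hNodd : Odd N) (hZ : ∀ x x', A x x' = - A x' x)
    (hdZ : ∀ (x : TPt N) (μ ν : Fin 3), μ ≠ ν → plaqT A x μ ν = 0)
    {R : ℤ} (hRN : 2*R + 3 ≤ (N:ℤ)) (y x : TPt N) (μ : Fin 3)
    (hx : x ∈ blockF N R y) (hx' : x + unitVec N μ ∈ blockF N R y)
    (h1 : tauBlk A y x = 0) (h2 : tauBlk A y (x + unitVec N μ) = 0) :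
    A x (x + unitVec N μ) = 0 := by
  have hb := (mem_blockF.mp hx) μ
  have hstep := tau_step A hNodd hZ hdZ y x μ (by omega)
  rw [h1, h2] at hstep
  linarith

/-- The crossing-bond base point of the face in direction `μ` determined by the
transverse coordinates of `x'`. -/
def wp (y : TPt N) (μ : Fin 3) (R : ℤ) (x' : TPt N) : TPt N :=
  fun i => if i = μ then y μ + ((R : ℤ) : ZMod N) else x' i

def ptF (y : TPt N) (μ ν : Fin 3) (R : ℤ) (u : TPt N) (t : ℤ) : TPt N :=
  fun i => if i = μ then y μ + ((R : ℤ) : ZMod N) else if i = ν then y ν + ((t : ℤ) : ZMod N)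
    else u i

lemma mem_blockF_of [NeZero N] (hNodd : Odd N) {R : ℤ} (hRN : 2*R ≤ (N:ℤ)-1) (y w : TPt N)
    (h : ∀ i, ∃ t : ℤ, w i - y i = (t : ZMod N) ∧ |t| ≤ R) : w ∈ blockF N R y := by
  rw [mem_blockF]
  intro i
  obtain ⟨t, h1, h2⟩ := h i
  rw [h1, symRep_unique hNodd _ t rfl (by omega)]
  exact h2

lemma coarse_shift (L : ℕ) (y : TPt N) (hy : isCoarse L N y) (μ : Fin 3) :
    isCoarse L N (y + cUnitVec L N μ) := by
  intro i
  obtain ⟨c, hc⟩ := hy i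
  by_cases h : i = μ
  · refine ⟨c + 1, ?_⟩
    have e : (y + cUnitVec L N μ) i = y i + (L : ZMod N) := by simp [cUnitVec, h, Pi.add_apply]
    rw [e, hc]; ring
  · refine ⟨c, ?_⟩
    have e : (y + cUnitVec L N μ) i = y i := by simp [cUnitVec, h, Pi.add_apply]
    rw [e, hc]

lemma seg_vanish (z : TPt N) (μ : Fin 3) (n : ℕ)
    (hb : ∀ j : ℕ, j < n → A (shiftT z μ (j:ℤ)) (shiftT z μ ((j:ℤ)+1)) = 0) :
    segT A z μ (n:ℤ) = 0 := by
  have h0 : (0:ℤ) ≤ (n:ℤ) := Int.ofNat_nonneg n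
  simp only [segT, if_pos h0, Int.toNat_natCast]
  exact Finset.sum_eq_zero fun j hj => hb j (Finset.mem_range.mp hj)

lemma shift_mem_block [NeZero N] (hNodd : Odd N) {R : ℤ} (hRN : 2*R ≤ (N:ℤ)-1)
    (y x' : TPt N) (hx' : x' ∈ blockF N R y) (μ : Fin 3) (t d : ℤ)
    (hb : |symRep N (x' μ - y μ) + t - d| ≤ R) :
    shiftT x' μ t ∈ blockF N R (shiftT y μ d) := by
  apply mem_blockF_of hNodd hRN
  intro i
  by_cases h : i = μ
  · subst h
    refine ⟨symRep N (x' i - y i) + t - d, ?_, hb⟩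
    simp only [shiftT, if_pos rfl]
    have hc : x' i - y i = ((symRep N (x' i - y i) : ℤ) : ZMod N) := (symRep_cast _).symm
    push_cast
    linear_combination hc
  · refine ⟨symRep N (x' i - y i), ?_, mem_blockF.mp hx' i⟩
    simp only [shiftT, if_neg h]
    rw [symRep_cast]

lemma shiftT_L_eq (L : ℕ) (y : TPt N) (μ : Fin 3) :
    shiftT y μ (L:ℤ) = y + cUnitVec L N μ := by
  funext i
  by_cases h : i = μ
  · simp [shiftT, cUnitVec, h, Pi.add_apply]
  · simp [shiftT, cUnitVec, h, Pi.add_apply]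

variable (A : TPt N → TPt N → ℝ) in
lemma seg_block_decomp [NeZero N] (hNodd : Odd N) (hZ : ∀ x x', A x x' = - A x' x)
    (hdZ : ∀ (x : TPt N) (μ ν : Fin 3), μ ≠ ν → plaqT A x μ ν = 0)
    (L : ℕ) (hL3 : 3 ≤ L) {R : ℤ} (hR : 2*R + 1 = (L:ℤ)) (hLN : (L:ℤ) + 2 ≤ (N:ℤ))
    (htau : ∀ y, isCoarse L N y → ∀ x ∈ blockF N R y, tauBlk A y x = 0)
    (y : TPt N) (hy : isCoarse L N y) (μ : Fin 3) (x' : TPt N) (hx' : x' ∈ blockF N R y) :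
    segT A x' μ (L:ℤ) = A (wp y μ R x') (wp y μ R x' + unitVec N μ) := by
  have hRN : 2*R ≤ (N:ℤ) - 1 := by omega
  have hR0 : 0 ≤ R := by omega
  have hint : ∀ (yc : TPt N), isCoarse L N yc → ∀ w, w ∈ blockF N R yc →
      w + unitVec N μ ∈ blockF N R yc → A w (w + unitVec N μ) = 0 := by
    intro yc hyc w hw hw'
    exact interior_bond A hNodd hZ hdZ (by omega) yc w μ hw hw'
      (htau yc hyc w hw) (htau yc hyc _ hw')
  obtain ⟨hs1, hs2⟩ := abs_le.mp (mem_blockF.mp hx' μ)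
  have hw : shiftT x' μ (R - symRep N (x' μ - y μ)) = wp y μ R x' := by
    funext i
    by_cases h : i = μ
    · subst h
      simp only [shiftT, wp, if_pos rfl]
      have hc : x' i - y i = ((symRep N (x' i - y i) : ℤ) : ZMod N) := (symRep_cast _).symm
      push_cast
      linear_combination hc
    · simp [shiftT, wp, h]
  have hbond : ∀ t d : ℤ,
      |symRep N (x' μ - y μ) + t - d| ≤ R → |symRep N (x' μ - y μ) + t + 1 - d| ≤ R →
      isCoarse L N (shiftT y μ d) →
      A (shiftT x' μ t) (shiftT x' μ (t+1)) = 0 := by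
    intro t d h1 h2 hyd
    have m1 := shift_mem_block hNodd hRN y x' hx' μ t d h1
    have m2 := shift_mem_block hNodd hRN y x' hx' μ (t+1) d (by
      rw [show symRep N (x' μ - y μ) + (t+1) - d = symRep N (x' μ - y μ) + t + 1 - d from by ring]
      exact h2)
    have e : shiftT x' μ (t+1) = shiftT x' μ t + unitVec N μ := by
      rw [← shiftT_add x' μ t 1, shiftT_one]
    rw [e]
    rw [e] at m2
    exact hint (shiftT y μ d) hyd (shiftT x' μ t) m1 m2
  have hy0 : isCoarse L N (shiftT y μ 0) := by rw [shiftT_zero]; exact hy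
  have hyL : isCoarse L N (shiftT y μ (L:ℤ)) := by
    rw [shiftT_L_eq]; exact coarse_shift L y hy μ
  have hseg1 : segT A x' μ (R - symRep N (x' μ - y μ)) = 0 := by
    rw [show R - symRep N (x' μ - y μ)
        = (((R - symRep N (x' μ - y μ)).toNat : ℕ) : ℤ) from by omega]
    apply seg_vanish
    intro j hj
    have hj' : (j:ℤ) + 1 ≤ R - symRep N (x' μ - y μ) := by omega
    exact hbond (j:ℤ) 0 (abs_le.mpr ⟨by omega, by omega⟩)
      (abs_le.mpr ⟨by omega, by omega⟩) hy0
  have hseg3 : segT A (shiftT (shiftT x' μ (R - symRep N (x' μ - y μ))) μ 1) μ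
      ((L:ℤ) - 1 - (R - symRep N (x' μ - y μ))) = 0 := by
    rw [shiftT_add x' μ (R - symRep N (x' μ - y μ)) 1]
    rw [show (L:ℤ) - 1 - (R - symRep N (x' μ - y μ))
        = ((((L:ℤ) - 1 - (R - symRep N (x' μ - y μ))).toNat : ℕ) : ℤ) from by omega]
    apply seg_vanish
    intro j hj
    have hj' : (j:ℤ) + 1 ≤ (L:ℤ) - 1 - (R - symRep N (x' μ - y μ)) := by omega
    rw [shiftT_add x' μ (R - symRep N (x' μ - y μ) + 1) (j:ℤ),
        shiftT_add x' μ (R - symRep N (x' μ - y μ) + 1) ((j:ℤ)+1),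
        show R - symRep N (x' μ - y μ) + 1 + ((j:ℤ)+1)
          = R - symRep N (x' μ - y μ) + 1 + (j:ℤ) + 1 from by ring]
    exact hbond (R - symRep N (x' μ - y μ) + 1 + (j:ℤ)) (L:ℤ)
      (abs_le.mpr ⟨by omega, by omega⟩) (abs_le.mpr ⟨by omega, by omega⟩) hyL
  rw [show (L:ℤ) = (R - symRep N (x' μ - y μ))
      + (1 + ((L:ℤ) - 1 - (R - symRep N (x' μ - y μ)))) from by ring,
    seg_add A hZ x' μ (R - symRep N (x' μ - y μ)) _,
    seg_add A hZ (shiftT x' μ (R - symRep N (x' μ - y μ))) μ 1 _, seg_one, hseg1, hseg3,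
    hw, shiftT_one]
  ring

variable (A : TPt N → TPt N → ℝ) in
lemma face_const_1D [NeZero N] (hNodd : Odd N) (hZ : ∀ x x', A x x' = - A x' x)
    (hdZ : ∀ (x : TPt N) (μ ν : Fin 3), μ ≠ ν → plaqT A x μ ν = 0)
    (L : ℕ) (hL3 : 3 ≤ L) {R : ℤ} (hR : 2*R + 1 = (L:ℤ)) (hLN : (L:ℤ) + 2 ≤ (N:ℤ))
    (htau : ∀ y, isCoarse L N y → ∀ x ∈ blockF N R y, tauBlk A y x = 0)
    (y : TPt N) (hy : isCoarse L N y) (μ ν : Fin 3) (hνμ : ν ≠ μ)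
    (u v : TPt N) (hu : u ∈ blockF N R y) (hv : v ∈ blockF N R y)
    (hagree : ∀ i, i ≠ ν → u i = v i) :
    A (wp y μ R u) (wp y μ R u + unitVec N μ) = A (wp y μ R v) (wp y μ R v + unitVec N μ) := by
  have hRN : 2*R ≤ (N:ℤ) - 1 := by omega
  have hR0 : 0 ≤ R := by omega
  have hint : ∀ (yc : TPt N), isCoarse L N yc → ∀ w (ρ : Fin 3), w ∈ blockF N R yc →
      w + unitVec N ρ ∈ blockF N R yc → A w (w + unitVec N ρ) = 0 := by
    intro yc hyc w ρ hw hw'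
    exact interior_bond A hNodd hZ hdZ (by omega) yc w ρ hw hw'
      (htau yc hyc w hw) (htau yc hyc _ hw')
  have hptmem : ∀ t : ℤ, |t| ≤ R → ptF y μ ν R u t ∈ blockF N R y := by
    intro t ht
    apply mem_blockF_of hNodd hRN
    intro i
    by_cases h1 : i = μ
    · refine ⟨R, ?_, by rw [abs_of_nonneg hR0]⟩
      simp only [ptF]
      rw [if_pos h1, h1]
      ring
    · by_cases h2 : i = ν
      · refine ⟨t, ?_, ht⟩
        simp only [ptF]
        rw [if_neg h1, if_pos h2, h2]
        ring
      · refine ⟨symRep N (u i - y i), ?_, mem_blockF.mp hu i⟩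
        simp only [ptF]
        rw [if_neg h1, if_neg h2, symRep_cast]
  have hptmem' : ∀ t : ℤ, |t| ≤ R →
      ptF y μ ν R u t + unitVec N μ ∈ blockF N R (y + cUnitVec L N μ) := by
    intro t ht
    apply mem_blockF_of hNodd hRN
    intro i
    have hLe : ((L:ℕ) : ZMod N) = ((2*R+1 : ℤ) : ZMod N) := by
      rw [hR]
      push_cast
      ring
    by_cases h1 : i = μ
    · refine ⟨-R, ?_, by rw [abs_neg, abs_of_nonneg hR0]⟩
      simp only [ptF, unitVec, cUnitVec, Pi.add_apply]
      rw [if_pos h1, if_pos h1, if_pos h1, h1, hLe]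
      push_cast
      ring
    · by_cases h2 : i = ν
      · refine ⟨t, ?_, ht⟩
        simp only [ptF, unitVec, cUnitVec, Pi.add_apply]
        rw [if_neg h1, if_pos h2, if_neg h1, if_neg h1, h2]
        ring
      · refine ⟨symRep N (u i - y i), ?_, mem_blockF.mp hu i⟩
        simp only [ptF, unitVec, cUnitVec, Pi.add_apply]
        rw [if_neg h1, if_neg h2, if_neg h1, if_neg h1, symRep_cast]
        ring
  have hpt1 : ∀ t : ℤ, ptF y μ ν R u (t+1) = ptF y μ ν R u t + unitVec N ν := by
    intro t
    funext i
    simp only [ptF, unitVec, Pi.add_apply]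
    by_cases h1 : i = μ
    · rw [if_pos h1, if_pos h1, if_neg (show ¬ i = ν from fun hh => hνμ (hh ▸ h1 ▸ rfl))]
      ring
    · rw [if_neg h1, if_neg h1]
      by_cases h2 : i = ν
      · rw [if_pos h2, if_pos h2, if_pos h2]
        push_cast
        ring
      · rw [if_neg h2, if_neg h2, if_neg h2]
        ring
  have hstep : ∀ t : ℤ, -R ≤ t → t + 1 ≤ R →
      A (ptF y μ ν R u t) (ptF y μ ν R u t + unitVec N μ)
        = A (ptF y μ ν R u (t+1)) (ptF y μ ν R u (t+1) + unitVec N μ) := by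
    intro t ht1 ht2
    have b1 : A (ptF y μ ν R u t) (ptF y μ ν R u t + unitVec N ν) = 0 := by
      apply hint y hy (ptF y μ ν R u t) ν (hptmem t (abs_le.mpr ⟨by omega, by omega⟩))
      rw [← hpt1 t]
      exact hptmem (t+1) (abs_le.mpr ⟨by omega, by omega⟩)
    have b2 : A (ptF y μ ν R u t + unitVec N μ)
        (ptF y μ ν R u t + unitVec N μ + unitVec N ν) = 0 := by
      apply hint (y + cUnitVec L N μ) (coarse_shift L y hy μ) (ptF y μ ν R u t + unitVec N μ) ν
        (hptmem' t (abs_le.mpr ⟨by omega, by omega⟩))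
      rw [show ptF y μ ν R u t + unitVec N μ + unitVec N ν
          = ptF y μ ν R u (t+1) + unitVec N μ from by rw [hpt1 t]; ring]
      exact hptmem' (t+1) (abs_le.mpr ⟨by omega, by omega⟩)
    have hp := hdZ (ptF y μ ν R u t) μ ν (Ne.symm hνμ)
    unfold plaqT at hp
    have b1' : A (ptF y μ ν R u t + unitVec N ν) (ptF y μ ν R u t) = 0 := by
      rw [hZ] at b1
      linarith
    have hT3 : A (ptF y μ ν R u t + unitVec N μ + unitVec N ν) (ptF y μ ν R u t + unitVec N ν)
        = - A (ptF y μ ν R u t + unitVec N ν)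
            (ptF y μ ν R u t + unitVec N ν + unitVec N μ) := by
      rw [hZ (ptF y μ ν R u t + unitVec N μ + unitVec N ν) (ptF y μ ν R u t + unitVec N ν),
        show ptF y μ ν R u t + unitVec N ν + unitVec N μ
          = ptF y μ ν R u t + unitVec N μ + unitVec N ν from by ring]
    rw [hpt1 t]
    linarith
  have hconst : ∀ t : ℤ, -R ≤ t → t ≤ R →
      A (ptF y μ ν R u t) (ptF y μ ν R u t + unitVec N μ)
        = A (ptF y μ ν R u (-R)) (ptF y μ ν R u (-R) + unitVec N μ) := by
    exact Int.le_induction (fun _ => rfl) (fun n hn ih hn1 => by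
      rw [← hstep n hn (by omega)]
      exact ih (by omega))
  have hwpu : wp y μ R u = ptF y μ ν R u (symRep N (u ν - y ν)) := by
    funext i
    simp only [wp, ptF]
    by_cases h1 : i = μ
    · rw [if_pos h1, if_pos h1]
    · rw [if_neg h1, if_neg h1]
      by_cases h2 : i = ν
      · rw [if_pos h2, h2, symRep_cast]
        ring
      · rw [if_neg h2]
  have hwpv : wp y μ R v = ptF y μ ν R u (symRep N (v ν - y ν)) := by
    funext i
    simp only [wp, ptF]
    by_cases h1 : i = μ
    · rw [if_pos h1, if_pos h1]
    · rw [if_neg h1, if_neg h1]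
      by_cases h2 : i = ν
      · rw [if_pos h2, h2, symRep_cast]
        ring
      · rw [if_neg h2, hagree i h2]
  obtain ⟨hu1, hu2⟩ := abs_le.mp (mem_blockF.mp hu ν)
  obtain ⟨hv1, hv2⟩ := abs_le.mp (mem_blockF.mp hv ν)
  rw [hwpu, hwpv, hconst (symRep N (u ν - y ν)) hu1 hu2, hconst (symRep N (v ν - y ν)) hv1 hv2]

variable (A : TPt N → TPt N → ℝ) in
lemma face_const [NeZero N] (hNodd : Odd N) (hZ : ∀ x x', A x x' = - A x' x)
    (hdZ : ∀ (x : TPt N) (μ ν : Fin 3), μ ≠ ν → plaqT A x μ ν = 0)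
    (L : ℕ) (hL3 : 3 ≤ L) {R : ℤ} (hR : 2*R + 1 = (L:ℤ)) (hLN : (L:ℤ) + 2 ≤ (N:ℤ))
    (htau : ∀ y, isCoarse L N y → ∀ x ∈ blockF N R y, tauBlk A y x = 0)
    (y : TPt N) (hy : isCoarse L N y) (μ : Fin 3)
    (u v : TPt N) (hu : u ∈ blockF N R y) (hv : v ∈ blockF N R y) :
    A (wp y μ R u) (wp y μ R u + unitVec N μ) = A (wp y μ R v) (wp y μ R v + unitVec N μ) := by
  obtain ⟨a, b, hab, haμ, hbμ⟩ := other_two μ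
  set u1 : TPt N := fun i => if i = a then v a else u i with hu1_def
  set u2 : TPt N := fun i => if i = b then v b else u1 i with hu2_def
  have hu1m : u1 ∈ blockF N R y := by
    rw [mem_blockF]
    intro i
    by_cases h : i = a
    · simp only [hu1_def]
      rw [if_pos h, h]
      exact mem_blockF.mp hv a
    · simp only [hu1_def]
      rw [if_neg h]
      exact mem_blockF.mp hu i
  have hu2m : u2 ∈ blockF N R y := by
    rw [mem_blockF]
    intro i
    by_cases h : i = b
    · simp only [hu2_def]
      rw [if_pos h, h]
      exact mem_blockF.mp hv b
    · simp only [hu2_def]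
      rw [if_neg h]
      exact mem_blockF.mp hu1m i
  have e1 := face_const_1D A hNodd hZ hdZ L hL3 hR hLN htau y hy μ a haμ u u1 hu hu1m
    (by intro i hi; simp only [hu1_def]; rw [if_neg hi])
  have e2 := face_const_1D A hNodd hZ hdZ L hL3 hR hLN htau y hy μ b hbμ u1 u2 hu1m hu2m
    (by intro i hi; simp only [hu2_def]; rw [if_neg hi])
  have e3 : wp y μ R u2 = wp y μ R v := by
    funext i
    simp only [wp]
    by_cases h : i = μ
    · rw [if_pos h, if_pos h]
    · rw [if_neg h, if_neg h]
      rcases three_cover a b μ hab haμ hbμ i with ha | hb | hμ'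
      · have hnb : ¬ i = b := by rw [ha]; exact hab
        simp only [hu2_def, hu1_def]
        rw [if_neg hnb, if_pos ha, ha]
      · simp only [hu2_def]
        rw [if_pos hb, hb]
      · exact absurd hμ' h
  rw [e1, e2, e3]

lemma exists_block [NeZero N] (hNodd : Odd N) (L : ℕ) (hL3 : 3 ≤ L) (hLodd : Odd L)
    {R : ℤ} (hR : 2*R + 1 = (L:ℤ)) (hLN : (L:ℤ) + 2 ≤ (N:ℤ)) (x : TPt N) :
    ∃ y : TPt N, isCoarse L N y ∧ x ∈ blockF N R y := by
  have hL0 : (0:ℤ) < (L:ℤ) := by omega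
  have hLo : (L:ℤ) % 2 = 1 := by
    obtain ⟨m, hm⟩ := hLodd
    omega
  have key : ∀ a : ZMod N, ∃ (yc : ZMod N) (s : ℤ), (∃ c : ZMod N, yc = (L : ZMod N) * c) ∧
      a - yc = (s : ZMod N) ∧ 2*|s| ≤ (L:ℤ) - 1 := by
    intro a
    set v : ℤ := (a.val : ℤ) with hv_def
    have hva : ((v : ℤ) : ZMod N) = a := by
      rw [hv_def]
      push_cast
      rw [ZMod.natCast_val, ZMod.cast_id]
    have hdm : (L:ℤ) * (v / L) + v % L = v := Int.mul_ediv_add_emod v L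
    have hr0 : 0 ≤ v % L := Int.emod_nonneg v (by omega)
    have hrL : v % L < L := Int.emod_lt_of_pos v hL0
    by_cases hc : 2 * (v % L) + 1 ≤ (L:ℤ)
    · refine ⟨(((L:ℤ) * (v / L) : ℤ) : ZMod N), v % L,
        ⟨((v / L : ℤ) : ZMod N), by push_cast; ring⟩, ?_,
        by rw [abs_of_nonneg hr0]; omega⟩
      rw [← hva, show (v % L : ℤ) = v - (L:ℤ) * (v / L) from by omega]
      push_cast
      ring
    · refine ⟨(((L:ℤ) * (v / L + 1) : ℤ) : ZMod N), v % L - L,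
        ⟨((v / L + 1 : ℤ) : ZMod N), by push_cast; ring⟩, ?_,
        by rw [abs_of_nonpos (by omega)]; omega⟩
      have hee : (v % L - L : ℤ) = v - (L:ℤ) * (v / L + 1) := by
        have hdist : (L:ℤ) * (v / L + 1) = (L:ℤ) * (v / L) + L := by ring
        omega
      rw [← hva, hee]
      push_cast
      ring
  choose yc s hcoarse hcast hbound using fun i => key (x i)
  refine ⟨fun i => yc i, fun i => hcoarse i, ?_⟩
  apply mem_blockF_of hNodd (by omega)
  intro i
  exact ⟨s i, hcast i, by have := hbound i; omega⟩

end BGR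

open BGR

/-- If a gauge field `Z` on `T = (ℤ/L^Mℤ)³` satisfies `QZ = 0` on every
coarse bond, `(τZ)(y,x) = 0` for every coarse site `y` and every `x ∈ B(y)`, and
`dZ(p) = 0` for every plaquette, then `Z` vanishes on every bond. -/
theorem block_gauge_rigidity (L M : ℕ) (hL3 : 3 ≤ L) (hLodd : Odd L) (hM : 2 ≤ M)
    [NeZero (L ^ M)]
    (Z : TPt (L ^ M) → TPt (L ^ M) → ℝ) (hZ : ∀ x x', Z x x' = - Z x' x)
    (hQ : ∀ y : TPt (L ^ M), isCoarse L (L ^ M) y → ∀ μ : Fin 3, Qc L Z y μ = 0)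
    (htau : ∀ y : TPt (L ^ M), isCoarse L (L ^ M) y →
      ∀ x ∈ blockF (L ^ M) (((L : ℤ) - 1) / 2) y, tauBlk Z y x = 0)
    (hdZ : ∀ (x : TPt (L ^ M)) (μ ν : Fin 3), μ ≠ ν → plaqT Z x μ ν = 0) :
    ∀ (x : TPt (L ^ M)) (μ : Fin 3), Z x (x + unitVec (L ^ M) μ) = 0 := by
  intro x μ
  have hNodd : Odd (L ^ M) := hLodd.pow
  have hLo : (L:ℤ) % 2 = 1 := by
    obtain ⟨m, hm⟩ := hLodd
    omega
  have hLN : (L:ℤ) + 2 ≤ ((L ^ M : ℕ) : ℤ) := by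
    have h1 : L ^ 2 ≤ L ^ M := Nat.pow_le_pow_right (by omega) hM
    have h2 : L + 2 ≤ L ^ 2 := by nlinarith
    exact_mod_cast le_trans h2 h1
  set R : ℤ := ((L:ℤ) - 1) / 2 with hR_def
  have hR : 2 * R + 1 = (L:ℤ) := by omega
  obtain ⟨y, hy, hxy⟩ := exists_block hNodd L hL3 hLodd hR hLN x
  obtain ⟨hs1, hs2⟩ := abs_le.mp (mem_blockF.mp hxy μ)
  by_cases hcase : symRep (L ^ M) (x μ - y μ) + 1 ≤ R
  · -- interior bond
    have hmem' : x + unitVec (L ^ M) μ ∈ blockF (L ^ M) R y := by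
      apply mem_blockF_of hNodd (by omega)
      intro i
      by_cases h : i = μ
      · refine ⟨symRep (L ^ M) (x μ - y μ) + 1, ?_, abs_le.mpr ⟨by omega, by omega⟩⟩
        have hc := symRep_cast (N := L ^ M) (x μ - y μ)
        simp only [Pi.add_apply, unitVec]
        rw [if_pos h, h]
        push_cast
        linear_combination hc.symm
      · refine ⟨symRep (L ^ M) (x i - y i), ?_, mem_blockF.mp hxy i⟩
        simp only [Pi.add_apply, unitVec]
        rw [if_neg h, symRep_cast]
        ring
    exact interior_bond Z hNodd hZ hdZ (by omega) y x μ hxy hmem'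
      (htau y hy x hxy) (htau y hy _ hmem')
  · -- crossing bond
    have hsR : symRep (L ^ M) (x μ - y μ) = R := by omega
    have hwx : wp y μ R x = x := by
      funext i
      simp only [wp]
      by_cases h : i = μ
      · rw [if_pos h, h, ← hsR, symRep_cast]
        ring
      · rw [if_neg h]
    have hQ0 := hQ y hy μ
    unfold Qc at hQ0
    have hsum : ∀ x' ∈ blockF (L ^ M) R y,
        segT Z x' μ (L:ℤ) = Z x (x + unitVec (L ^ M) μ) := by
      intro x' hx'
      rw [seg_block_decomp Z hNodd hZ hdZ L hL3 hR hLN htau y hy μ x' hx',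
          face_const Z hNodd hZ hdZ L hL3 hR hLN htau y hy μ x' x hx' hxy, hwx]
    rw [Finset.sum_congr rfl hsum, Finset.sum_const, nsmul_eq_mul] at hQ0
    have hymem : y ∈ blockF (L ^ M) R y := by
      apply mem_blockF_of hNodd (by omega)
      intro i
      refine ⟨0, by rw [sub_self]; norm_num, by rw [abs_zero]; omega⟩
    have hL4 : ((L:ℝ) ^ 4)⁻¹ ≠ 0 := by
      apply inv_ne_zero
      apply pow_ne_zero
      exact Nat.cast_ne_zero.mpr (by omega)
    rcases mul_eq_zero.mp hQ0 with h | h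
    · exact absurd h hL4
    · rcases mul_eq_zero.mp h with h' | h'
      · exact absurd h' (Nat.cast_ne_zero.mpr (Finset.card_ne_zero_of_mem hymem))
      · exact h'
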